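/- Let H be a separable real Hilbert space, (F_i)_{i=0}^n a filtration on a probability space, and X_1,…,X_n Bochner-integrable H-valued random variables such that, for each i, X_i is F_i-measurable, E[X_i | F_{i−1}] = 0 almost surely, and ‖X_i‖ ≤ B almost surely for a constant B > 0. Then for any δ ∈ (0,1), with probability at least 1−δ: ‖(1/n)·Σ_{i=1}^n X_i‖ ≤ B·√(2 ln(2/δ)/n) + 2B·ln(2/δ)/(3n). (Hilbert-space martingale concentration underlying Theorem 4.1, via Pinelis' inequality.) -/

import Mathlib

open MeasureTheory ProbabilityTheory


/-- sinh x ≤ x * cosh x for 0 ≤ x. -/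
lemma sinh_le_mul_cosh {x : ℝ} (hx : 0 ≤ x) : Real.sinh x ≤ x * Real.cosh x := by
  have h1 := Real.hasSum_sinh x
  have h2 := (Real.hasSum_cosh x).mul_left x
  refine hasSum_le (fun n => ?_) h1 h2
  have hfac : ((2 * n).factorial : ℝ) ≤ ((2 * n + 1).factorial : ℝ) := by
    exact_mod_cast Nat.factorial_le (Nat.le_succ _)
  have hxp : (0:ℝ) ≤ x ^ (2 * n + 1) := pow_nonneg hx _
  rw [show x * (x ^ (2 * n) / ((2 * n).factorial : ℝ)) = x ^ (2 * n + 1) / ((2 * n).factorial : ℝ) by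
    rw [pow_succ]; ring]
  apply div_le_div_of_nonneg_left hxp
  · exact_mod_cast Nat.factorial_pos _
  · exact hfac

/-- monotonicity of sinh z / z on positives -/
lemma sinh_div_mono {x y : ℝ} (hx : 0 < x) (hxy : x ≤ y) :
    Real.sinh x / x ≤ Real.sinh y / y := by
  have hy : 0 < y := lt_of_lt_of_le hx hxy
  rw [div_le_div_iff₀ hx hy]
  -- sinh x * y ≤ sinh y * x
  have key : MonotoneOn (fun z => Real.sinh z / z) (Set.Ioi (0:ℝ)) := by
    have hD : Convex ℝ (Set.Ioi (0:ℝ)) := convex_Ioi 0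
    refine monotoneOn_of_deriv_nonneg hD ?_ ?_ ?_
    · exact (Real.continuous_sinh.continuousOn.div continuous_id.continuousOn
        (fun z hz => ne_of_gt hz))
    · rw [interior_Ioi]
      intro z hz
      exact ((Real.differentiable_sinh z).div differentiableAt_id (ne_of_gt hz)).differentiableWithinAt
    · rw [interior_Ioi]
      intro z hz
      have hd : HasDerivAt (fun z => Real.sinh z / z)
          ((Real.cosh z * z - Real.sinh z * 1) / z ^ 2) z :=
        (Real.hasDerivAt_sinh z).div (hasDerivAt_id z) (ne_of_gt hz)
      rw [hd.deriv]
      apply div_nonneg _ (sq_nonneg z)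
      have := sinh_le_mul_cosh (le_of_lt hz)
      nlinarith
  have := key hx (lt_of_lt_of_le hx hxy) hxy
  rw [div_le_div_iff₀ hx hy] at this
  linarith

/-- convexity of t ↦ cosh (L √t) on [0,∞) -/
lemma convexOn_cosh_sqrt {L : ℝ} (hL : 0 < L) :
    ConvexOn ℝ (Set.Ici (0:ℝ)) (fun t => Real.cosh (L * Real.sqrt t)) := by
  refine MonotoneOn.convexOn_of_deriv (convex_Ici 0) ?_ ?_ ?_
  · exact (Real.continuous_cosh.comp (continuous_const.mul Real.continuous_sqrt)).continuousOn
  · rw [interior_Ici]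
    intro t ht
    have hd := ((Real.hasDerivAt_cosh (L * Real.sqrt t)).comp t
      ((Real.hasDerivAt_sqrt (ne_of_gt ht)).const_mul L))
    exact hd.differentiableAt.differentiableWithinAt
  · rw [interior_Ici]
    intro t₁ ht₁ t₂ ht₂ ht
    have hder : ∀ t : ℝ, 0 < t → deriv (fun t => Real.cosh (L * Real.sqrt t)) t
        = (L^2/2) * (Real.sinh (L * Real.sqrt t) / (L * Real.sqrt t)) := by
      intro t htpos
      have hs : Real.sqrt t ≠ 0 := ne_of_gt (Real.sqrt_pos.mpr htpos)
      have hd := ((Real.hasDerivAt_cosh (L * Real.sqrt t)).comp t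
        ((Real.hasDerivAt_sqrt (ne_of_gt htpos)).const_mul L))
      rw [show (fun t => Real.cosh (L * Real.sqrt t)) = (Real.cosh ∘ fun y => L * Real.sqrt y) from rfl,
        hd.deriv]
      field_simp
    rw [hder t₁ ht₁, hder t₂ ht₂]
    have h1 : 0 < L * Real.sqrt t₁ := mul_pos hL (Real.sqrt_pos.mpr ht₁)
    have h2 : L * Real.sqrt t₁ ≤ L * Real.sqrt t₂ :=
      mul_le_mul_of_nonneg_left (Real.sqrt_le_sqrt ht) hL.le
    exact mul_le_mul_of_nonneg_left (sinh_div_mono h1 h2) (by positivity)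


/-- Key pointwise inequality (hyperbolic law of cosines bound). -/
lemma key_ptwise {H : Type*} [NormedAddCommGroup H] [InnerProductSpace ℝ H]
    {L B : ℝ} (hL : 0 < L) (hB : 0 < B) (s x : H) (hx : ‖x‖ ≤ B) :
    Real.cosh (L * ‖s + x‖) ≤ Real.cosh (L * ‖s‖) * Real.cosh (L * B)
      + (inner ℝ s x : ℝ) * (Real.sinh (L * ‖s‖) * Real.sinh (L * B) / (‖s‖ * B)) := by
  rcases eq_or_ne s 0 with hs | hs
  · subst hs
    simp only [inner_zero_left, zero_mul, add_zero, norm_zero, mul_zero, Real.cosh_zero, one_mul,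
      zero_add]
    have : L * ‖x‖ ≤ L * B := mul_le_mul_of_nonneg_left hx hL.le
    rw [Real.cosh_le_cosh, abs_of_nonneg (mul_nonneg hL.le (norm_nonneg _)),
      abs_of_nonneg (mul_nonneg hL.le hB.le)]
    exact this
  · set c := ‖s‖ with hc
    have hcpos : 0 < c := norm_pos_iff.mpr hs
    set a := (inner ℝ s x : ℝ) with ha
    have haabs : |a| ≤ c * B := by
      calc |a| ≤ ‖s‖ * ‖x‖ := abs_real_inner_le_norm s x
        _ ≤ c * B := by exact mul_le_mul_of_nonneg_left hx (norm_nonneg s)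
    set g := fun t => Real.cosh (L * Real.sqrt t) with hg
    have hmono : ∀ t₁ t₂ : ℝ, 0 ≤ t₁ → t₁ ≤ t₂ → g t₁ ≤ g t₂ := by
      intro t₁ t₂ h0 h12
      simp only [hg]
      refine Real.cosh_le_cosh.mpr ?_
      rw [abs_of_nonneg (mul_nonneg hL.le (Real.sqrt_nonneg _)),
        abs_of_nonneg (mul_nonneg hL.le (Real.sqrt_nonneg _))]
      exact mul_le_mul_of_nonneg_left (Real.sqrt_le_sqrt h12) hL.le
    have hnorm : Real.cosh (L * ‖s + x‖) = g (‖s + x‖ ^ 2) := by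
      simp only [hg, Real.sqrt_sq (norm_nonneg _)]
    have hexp : ‖s + x‖ ^ 2 = c ^ 2 + 2 * a + ‖x‖ ^ 2 := by
      show ‖s + x‖ ^ 2 = ‖s‖ ^ 2 + 2 * (inner ℝ s x : ℝ) + ‖x‖ ^ 2
      rw [norm_add_sq_real]
    have hle2 : ‖s + x‖ ^ 2 ≤ c ^ 2 + 2 * a + B ^ 2 := by
      rw [hexp]
      have : ‖x‖ ^ 2 ≤ B ^ 2 := by nlinarith [norm_nonneg x]
      linarith
    have step1 : Real.cosh (L * ‖s + x‖) ≤ g (c ^ 2 + 2 * a + B ^ 2) := by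
      rw [hnorm]; exact hmono _ _ (sq_nonneg _) hle2
    -- convex combination
    set θ := (c * B - a) / (2 * (c * B)) with hθ
    have hcB : 0 < c * B := mul_pos hcpos hB
    have hθ0 : 0 ≤ θ := by
      apply div_nonneg _ (by linarith)
      have := abs_le.mp haabs
      linarith [this.2]
    have hθ1 : 0 ≤ 1 - θ := by
      rw [hθ]
      rw [sub_nonneg, div_le_one (by linarith)]
      have := abs_le.mp haabs
      linarith [this.1]
    have hcomb : θ * (c - B) ^ 2 + (1 - θ) * (c + B) ^ 2 = c ^ 2 + 2 * a + B ^ 2 := by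
      rw [hθ]; field_simp
      ring
    have hconv := (convexOn_cosh_sqrt hL).2 (Set.mem_Ici.mpr (sq_nonneg (c - B)))
      (Set.mem_Ici.mpr (sq_nonneg (c + B))) hθ0 hθ1 (by linarith)
    simp only [smul_eq_mul] at hconv
    rw [hcomb] at hconv
    have hgm : g ((c - B) ^ 2) = Real.cosh (L * c) * Real.cosh (L * B)
        - Real.sinh (L * c) * Real.sinh (L * B) := by
      simp only [hg]
      rw [Real.sqrt_sq_eq_abs]
      have : Real.cosh (L * |c - B|) = Real.cosh (L * (c - B)) := by
        rcases abs_cases (c - B) with ⟨h1, _⟩ | ⟨h1, _⟩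
        · rw [h1]
        · rw [h1, mul_neg, Real.cosh_neg]
      rw [this, mul_sub, Real.cosh_sub]
    have hgp : g ((c + B) ^ 2) = Real.cosh (L * c) * Real.cosh (L * B)
        + Real.sinh (L * c) * Real.sinh (L * B) := by
      simp only [hg]
      rw [Real.sqrt_sq_eq_abs, abs_of_nonneg (by linarith), mul_add, Real.cosh_add]
    have final : g (c ^ 2 + 2 * a + B ^ 2)
        ≤ Real.cosh (L * c) * Real.cosh (L * B)
          + (a / (c * B)) * (Real.sinh (L * c) * Real.sinh (L * B)) := by
      calc g (c ^ 2 + 2 * a + B ^ 2) ≤ θ * g ((c - B) ^ 2) + (1 - θ) * g ((c + B) ^ 2) := hconv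
        _ = Real.cosh (L * c) * Real.cosh (L * B)
            + (1 - 2 * θ) * (Real.sinh (L * c) * Real.sinh (L * B)) := by
            rw [hgm, hgp]; ring
        _ = _ := by
            congr 1
            congr 1
            rw [hθ]
            field_simp
            ring
    calc Real.cosh (L * ‖s + x‖) ≤ g (c ^ 2 + 2 * a + B ^ 2) := step1
      _ ≤ Real.cosh (L * c) * Real.cosh (L * B)
          + (a / (c * B)) * (Real.sinh (L * c) * Real.sinh (L * B)) := final
      _ = Real.cosh (L * c) * Real.cosh (L * B)
          + a * (Real.sinh (L * c) * Real.sinh (L * B) / (c * B)) := by ring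


lemma integral_inner_eq_zero
    {H : Type*} [NormedAddCommGroup H] [InnerProductSpace ℝ H] [CompleteSpace H]
    {Ω : Type*} {mF m0 : MeasurableSpace Ω} {μ : Measure Ω} [IsProbabilityMeasure μ]
    (hm : mF ≤ m0)
    {W Y : Ω → H} (hWm : AEStronglyMeasurable[mF] W μ)
    (hW2 : MemLp W 2 μ) (hY2 : MemLp Y 2 μ)
    (hY0 : μ[Y|mF] =ᵐ[μ] 0) :
    ∫ ω, (inner ℝ (W ω) (Y ω) : ℝ) ∂μ = 0 := by
  haveI : IsFiniteMeasure (μ.trim hm) := isFiniteMeasure_trim hm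
  haveI : SigmaFinite (μ.trim hm) := inferInstance
  set W2 : Lp H 2 μ := hW2.toLp W with hW2def
  set Y2 : Lp H 2 μ := hY2.toLp Y with hY2def
  have hYint : Integrable Y μ := hY2.integrable one_le_two
  -- condexpL2 of Y2 is a.e. the conditional expectation of Y
  have hcl2 : (condExpL2 H ℝ hm Y2 : Ω → H) =ᵐ[μ] μ[Y|mF] := by
    refine ae_eq_condExp_of_forall_setIntegral_eq hm hYint ?_ ?_ ?_
    · intro s _ _
      exact (integrable_condExpL2_of_isFiniteMeasure (μ := μ) hm).integrableOn
    · intro s hs hμs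
      rw [integral_condExpL2_eq (𝕜 := ℝ) hm Y2 hs hμs.ne]
      exact setIntegral_congr_ae (hm s hs) ((hY2.coeFn_toLp).mono fun x hx _ => hx)
    · exact aestronglyMeasurable_condExpL2 hm Y2
  have hz : (condExpL2 H ℝ hm Y2 : Ω → H) =ᵐ[μ] 0 := hcl2.trans hY0
  -- inner products in L²
  have hWm2 : AEStronglyMeasurable[mF] (W2 : Ω → H) μ :=
    hWm.congr (hW2.coeFn_toLp).symm
  have key : (inner ℝ Y2 W2 : ℝ) = inner ℝ ((condExpL2 H ℝ hm Y2 : Lp H 2 μ)) W2 :=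
    (inner_condExpL2_eq_inner_fun hm Y2 W2 hWm2).symm
  have h1 : ∫ ω, (inner ℝ (W ω) (Y ω) : ℝ) ∂μ = (inner ℝ Y2 W2 : ℝ) := by
    rw [L2.inner_def Y2 W2]
    refine integral_congr_ae ?_
    filter_upwards [hY2.coeFn_toLp, hW2.coeFn_toLp] with ω h1 h2
    rw [h1, h2, real_inner_comm]
  have h2 : (inner ℝ ((condExpL2 H ℝ hm Y2 : Lp H 2 μ)) W2 : ℝ) = 0 := by
    rw [L2.inner_def ((condExpL2 H ℝ hm Y2 : Lp H 2 μ)) W2]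
    have : ∀ᵐ ω ∂μ, (inner ℝ ((condExpL2 H ℝ hm Y2 : Ω → H) ω) ((W2 : Ω → H) ω) : ℝ) = 0 := by
      filter_upwards [hz] with ω hω
      rw [hω]
      simp
    rw [integral_congr_ae this, integral_zero]
  rw [h1, key, h2]


theorem stmt_10
    {H : Type*} [NormedAddCommGroup H] [InnerProductSpace ℝ H] [CompleteSpace H]
    [SecondCountableTopology H] [MeasurableSpace H] [BorelSpace H]
    {Ω₀ : Type*} [m : MeasurableSpace Ω₀]
    (Pr : Measure Ω₀) [IsProbabilityMeasure Pr]
    (n : ℕ) (hn : 0 < n)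
    (ℱ : ℕ → MeasurableSpace Ω₀) (hmono : Monotone ℱ) (hle : ∀ i, ℱ i ≤ m)
    (X : Fin n → Ω₀ → H)
    (hint : ∀ i, Integrable (X i) Pr)
    (hmeas : ∀ i : Fin n, StronglyMeasurable[ℱ ((i : ℕ) + 1)] (X i))
    (hmds : ∀ i : Fin n, (Pr[X i|ℱ (i : ℕ)]) =ᵐ[Pr] 0)
    (B : ℝ) (hB : 0 < B)
    (hbdd : ∀ i : Fin n, ∀ᵐ ω ∂Pr, ‖X i ω‖ ≤ B)
    (δ : ℝ) (hδ : δ ∈ Set.Ioo (0 : ℝ) 1) :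
    ENNReal.ofReal (1 - δ) ≤
      Pr {ω | ‖(1 / n : ℝ) • ∑ i, X i ω‖ ≤
        B * Real.sqrt (2 * Real.log (2 / δ) / n)
          + 2 * B * Real.log (2 / δ) / (3 * n)} := by
  obtain ⟨hδ0, hδ1⟩ := hδ
  have hn' : (0:ℝ) < n := by exact_mod_cast hn
  set Λ : ℝ := Real.log (2 / δ) with hΛdef
  have hΛ : 0 < Λ := Real.log_pos (by rw [lt_div_iff₀ hδ0]; linarith)
  set t : ℝ := B * Real.sqrt (2 * Λ / n) + 2 * B * Λ / (3 * n) with htdef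
  have hsq : 0 < Real.sqrt (2 * Λ / n) := Real.sqrt_pos.mpr (by positivity)
  have ht : 0 < t := by positivity
  set r : ℝ := n * t with hrdef
  have hr : 0 < r := by positivity
  set L : ℝ := r / (n * B ^ 2) with hLdef
  have hL : 0 < L := by positivity
  -- the increment processes
  set Y : ℕ → Ω₀ → H := fun i => if h : i < n then X ⟨i, h⟩ else 0 with hYdef
  set S : ℕ → Ω₀ → H := fun k ω => ∑ i ∈ Finset.range k, Y i ω with hSdef
  have hYX : ∀ (i : ℕ) (h : i < n), Y i = X ⟨i, h⟩ := by
    intro i h; simp only [hYdef, dif_pos h]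
  have hYmeas : ∀ i : ℕ, i < n → StronglyMeasurable[ℱ (i + 1)] (Y i) := by
    intro i h; rw [hYX i h]; exact hmeas ⟨i, h⟩
  have hYbdd : ∀ i : ℕ, i < n → ∀ᵐ ω ∂Pr, ‖Y i ω‖ ≤ B := by
    intro i h; rw [hYX i h]; exact hbdd ⟨i, h⟩
  have hSmeas : ∀ k : ℕ, k ≤ n → StronglyMeasurable[ℱ k] (S k) := by
    intro k hk
    induction k with
    | zero =>
      have : S 0 = fun _ => 0 := by funext ω; simp [hSdef]
      rw [this]; exact stronglyMeasurable_const
    | succ k ih =>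
      have hS1 : S (k + 1) = fun ω => S k ω + Y k ω := by
        funext ω; simp [hSdef, Finset.sum_range_succ]
      rw [hS1]
      exact ((ih (le_of_lt hk)).mono (hmono (Nat.le_succ k))).add (hYmeas k hk)
  have hSbdd : ∀ k : ℕ, ∀ᵐ ω ∂Pr, ‖S k ω‖ ≤ k * B := by
    intro k
    have hall : ∀ᵐ ω ∂Pr, ∀ i : Fin n, ‖X i ω‖ ≤ B := ae_all_iff.mpr hbdd
    filter_upwards [hall] with ω hω
    calc ‖S k ω‖ ≤ ∑ i ∈ Finset.range k, ‖Y i ω‖ := norm_sum_le _ _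
      _ ≤ ∑ _i ∈ Finset.range k, B := by
          apply Finset.sum_le_sum
          intro i _
          by_cases h : i < n
          · rw [hYX i h]; exact hω ⟨i, h⟩
          · simp only [hYdef, dif_neg h]; simpa using hB.le
      _ = k * B := by simp [mul_comm]
  -- main martingale estimate
  have main : ∀ k : ℕ, k ≤ n →
      ∫ ω, Real.cosh (L * ‖S k ω‖) ∂Pr ≤ Real.cosh (L * B) ^ k := by
    intro k hk
    induction k with
    | zero =>
      have h0 : (fun ω => Real.cosh (L * ‖S 0 ω‖)) = fun _ => (1:ℝ) := by
        funext ω; simp [hSdef]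
      rw [h0, integral_const]; simp
    | succ k ih =>
      have hkn : k < n := hk
      have ihk := ih (le_of_lt hk)
      have hSk := hSmeas k (le_of_lt hk)
      set c : Ω₀ → ℝ :=
        fun ω => Real.sinh (L * ‖S k ω‖) * Real.sinh (L * B) / (‖S k ω‖ * B) with hcdef
      set W : Ω₀ → H := fun ω => c ω • S k ω with hWdef
      set C1 : ℝ := Real.sinh (L * (k * B)) * Real.sinh (L * B) / B with hC1def
      have hC1 : 0 ≤ C1 := by
        apply div_nonneg _ hB.le
        apply mul_nonneg <;> exact Real.sinh_nonneg_iff.mpr (by positivity)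
      -- measurability
      have hnk : StronglyMeasurable[ℱ k] (fun ω => ‖S k ω‖) := hSk.norm
      have hc : StronglyMeasurable[ℱ k] c := by
        apply Measurable.stronglyMeasurable
        exact ((Real.continuous_sinh.measurable.comp
          (hnk.measurable.const_mul L)).mul_const _).div (hnk.measurable.mul_const B)
      have hW : StronglyMeasurable[ℱ k] W := hc.smul hSk
      -- bound on W
      have hWbdd : ∀ᵐ ω ∂Pr, ‖W ω‖ ≤ C1 := by
        filter_upwards [hSbdd k] with ω hω
        by_cases h0 : ‖S k ω‖ = 0
        · have : S k ω = 0 := norm_eq_zero.mp h0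
          simp only [hWdef, this, smul_zero, norm_zero]
          exact hC1
        · have hpos : 0 < ‖S k ω‖ := lt_of_le_of_ne (norm_nonneg _) (Ne.symm h0)
          have hcnn : 0 ≤ c ω := by
            apply div_nonneg _ (by positivity)
            apply mul_nonneg <;> exact Real.sinh_nonneg_iff.mpr (by positivity)
          have heq : ‖W ω‖ = Real.sinh (L * ‖S k ω‖) * Real.sinh (L * B) / B := by
            rw [hWdef]
            simp only [norm_smul, Real.norm_eq_abs, abs_of_nonneg hcnn]
            rw [hcdef]
            field_simp
          rw [heq, hC1def]
          gcongr
          · exact Real.sinh_le_sinh.mpr (mul_le_mul_of_nonneg_left hω hL.le)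
      -- pointwise inequality
      have hptw : ∀ᵐ ω ∂Pr, Real.cosh (L * ‖S (k+1) ω‖) ≤
          Real.cosh (L * ‖S k ω‖) * Real.cosh (L * B) + (inner ℝ (W ω) (Y k ω) : ℝ) := by
        filter_upwards [hYbdd k hkn] with ω hω
        have h1 : S (k+1) ω = S k ω + Y k ω := by
          simp [hSdef, Finset.sum_range_succ]
        rw [h1]
        have hkey := key_ptwise hL hB (S k ω) (Y k ω) hω
        have h2 : (inner ℝ (W ω) (Y k ω) : ℝ)
            = (inner ℝ (S k ω) (Y k ω) : ℝ)
              * (Real.sinh (L * ‖S k ω‖) * Real.sinh (L * B) / (‖S k ω‖ * B)) := by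
          rw [hWdef]
          rw [real_inner_smul_left]
          rw [hcdef]
          ring
        rw [h2]
        exact hkey
      -- integrability
      have hSkp1m : AEStronglyMeasurable (S (k+1)) Pr :=
        ((hSmeas (k+1) hk).mono (hle (k+1))).aestronglyMeasurable
      have hSkm : AEStronglyMeasurable (S k) Pr :=
        (hSk.mono (hle k)).aestronglyMeasurable
      have hcosh_bdd : ∀ (j : ℕ), ∀ᵐ ω ∂Pr,
          ‖Real.cosh (L * ‖S j ω‖)‖ ≤ Real.cosh (L * (j * B)) := by
        intro j
        filter_upwards [hSbdd j] with ω hω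
        rw [Real.norm_eq_abs, abs_of_pos (Real.cosh_pos _), Real.cosh_le_cosh,
          abs_of_nonneg (by positivity), abs_of_nonneg (by positivity)]
        exact mul_le_mul_of_nonneg_left hω hL.le
      have hint1 : Integrable (fun ω => Real.cosh (L * ‖S (k+1) ω‖)) Pr := by
        refine ⟨(Real.continuous_cosh.comp
          (continuous_const.mul continuous_norm)).comp_aestronglyMeasurable hSkp1m, ?_⟩
        exact HasFiniteIntegral.of_bounded (hcosh_bdd (k+1))
      have hint2 : Integrable (fun ω => Real.cosh (L * ‖S k ω‖) * Real.cosh (L * B)) Pr := by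
        refine ⟨((Real.continuous_cosh.comp
          (continuous_const.mul continuous_norm)).comp_aestronglyMeasurable hSkm).mul_const _, ?_⟩
        apply HasFiniteIntegral.of_bounded
          (C := Real.cosh (L * (k * B)) * Real.cosh (L * B))
        filter_upwards [hcosh_bdd k] with ω hω
        rw [Real.norm_eq_abs, abs_mul, abs_of_pos (Real.cosh_pos _),
          abs_of_pos (Real.cosh_pos _)]
        have := le_of_abs_le ((Real.norm_eq_abs _) ▸ hω)
        exact mul_le_mul_of_nonneg_right this (Real.cosh_pos _).le
      have hWaesm : AEStronglyMeasurable W Pr :=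
        (hW.mono (hle k)).aestronglyMeasurable
      have hYkaesm : AEStronglyMeasurable (Y k) Pr := by
        rw [hYX k hkn]
        exact ((hmeas ⟨k, hkn⟩).mono (hle _)).aestronglyMeasurable
      have hint3 : Integrable (fun ω => (inner ℝ (W ω) (Y k ω) : ℝ)) Pr := by
        refine ⟨hWaesm.inner hYkaesm, ?_⟩
        apply HasFiniteIntegral.of_bounded (C := C1 * B)
        filter_upwards [hWbdd, hYbdd k hkn] with ω h1 h2
        calc ‖(inner ℝ (W ω) (Y k ω) : ℝ)‖ ≤ ‖W ω‖ * ‖Y k ω‖ := norm_inner_le_norm _ _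
          _ ≤ C1 * B := mul_le_mul h1 h2 (norm_nonneg _) hC1
      -- the inner-product term integrates to zero
      have hzero : ∫ ω, (inner ℝ (W ω) (Y k ω) : ℝ) ∂Pr = 0 := by
        apply integral_inner_eq_zero (hle k) (hW.aestronglyMeasurable)
        · exact MemLp.of_bound hWaesm C1 hWbdd
        · exact MemLp.of_bound hYkaesm B (hYbdd k hkn)
        · rw [hYX k hkn]
          exact hmds ⟨k, hkn⟩
      calc ∫ ω, Real.cosh (L * ‖S (k+1) ω‖) ∂Pr
          ≤ ∫ ω, (Real.cosh (L * ‖S k ω‖) * Real.cosh (L * B)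
              + (inner ℝ (W ω) (Y k ω) : ℝ)) ∂Pr :=
            integral_mono_ae hint1 (hint2.add hint3) hptw
        _ = ∫ ω, Real.cosh (L * ‖S k ω‖) * Real.cosh (L * B) ∂Pr
              + ∫ ω, (inner ℝ (W ω) (Y k ω) : ℝ) ∂Pr := integral_add hint2 hint3
        _ = (∫ ω, Real.cosh (L * ‖S k ω‖) ∂Pr) * Real.cosh (L * B) := by
            rw [hzero, add_zero, integral_mul_const]
        _ ≤ Real.cosh (L * B) ^ k * Real.cosh (L * B) :=
            mul_le_mul_of_nonneg_right ihk (Real.cosh_pos _).le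
        _ = Real.cosh (L * B) ^ (k + 1) := (pow_succ _ _).symm
  -- Chernoff step
  -- Chernoff step
  have hsum : ∀ ω, ∑ i, X i ω = S n ω := by
    intro ω
    show ∑ i, X i ω = ∑ i ∈ Finset.range n, Y i ω
    rw [← Fin.sum_univ_eq_sum_range (fun i => Y i ω) n]
    apply Finset.sum_congr rfl
    intro i _
    rw [hYX i i.isLt]
  -- numerical bound
  have hnum : Real.cosh (L * B) ^ n / Real.cosh (L * r) ≤ δ := by
    have h1 : Real.cosh (L * B) ^ n ≤ Real.exp (n * ((L * B) ^ 2 / 2)) := by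
      calc Real.cosh (L * B) ^ n ≤ Real.exp ((L * B) ^ 2 / 2) ^ n :=
            pow_le_pow_left₀ (Real.cosh_pos _).le (Real.cosh_le_exp_half_sq _) n
        _ = Real.exp (n * ((L * B) ^ 2 / 2)) := by rw [← Real.exp_nat_mul]
    have h2 : Real.exp (L * r) / 2 ≤ Real.cosh (L * r) := by
      rw [Real.cosh_eq]
      have := (Real.exp_pos (-(L * r))).le
      linarith
    have h3 : Real.cosh (L * B) ^ n / Real.cosh (L * r)
        ≤ Real.exp (n * ((L * B) ^ 2 / 2)) / (Real.exp (L * r) / 2) := by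
      apply div_le_div₀ (Real.exp_nonneg _) h1 (by positivity) h2
    have h4 : Real.exp (n * ((L * B) ^ 2 / 2)) / (Real.exp (L * r) / 2)
        = 2 * Real.exp (n * ((L * B) ^ 2 / 2) - L * r) := by
      rw [Real.exp_sub]; field_simp
    have harg : n * ((L * B) ^ 2 / 2) - L * r = -(r ^ 2 / (2 * (n * B ^ 2))) := by
      rw [hLdef]; field_simp; ring
    have hr2 : 2 * (n * B ^ 2) * Λ ≤ r ^ 2 := by
      have hrge : (n : ℝ) * (B * Real.sqrt (2 * Λ / n)) ≤ r := by
        rw [hrdef, htdef]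
        have : (0:ℝ) ≤ 2 * B * Λ / (3 * n) := by positivity
        nlinarith
      have hsq2 : ((n : ℝ) * (B * Real.sqrt (2 * Λ / n))) ^ 2 = 2 * (n * B ^ 2) * Λ := by
        rw [mul_pow, mul_pow, Real.sq_sqrt (by positivity)]
        field_simp
      calc 2 * (n * B ^ 2) * Λ = ((n : ℝ) * (B * Real.sqrt (2 * Λ / n))) ^ 2 := hsq2.symm
        _ ≤ r ^ 2 := by
            apply pow_le_pow_left₀ (by positivity) hrge
    have h5 : Real.exp (n * ((L * B) ^ 2 / 2) - L * r) ≤ δ / 2 := by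
      rw [harg, ← Real.le_log_iff_exp_le (by positivity : (0:ℝ) < δ / 2)]
      have hlog : Real.log (δ / 2) = -Λ := by
        rw [hΛdef, ← Real.log_inv]
        congr 1
        rw [inv_div]
      rw [hlog, neg_le_neg_iff]
      rw [le_div_iff₀ (by positivity : (0:ℝ) < 2 * (n * B ^ 2))]
      linarith [hr2]
    calc Real.cosh (L * B) ^ n / Real.cosh (L * r)
        ≤ 2 * Real.exp (n * ((L * B) ^ 2 / 2) - L * r) := by rw [← h4]; exact h3
      _ ≤ 2 * (δ / 2) := by linarith
      _ = δ := by ring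
  -- Markov inequality
  have hSn_sm : StronglyMeasurable (S n) := (hSmeas n le_rfl).mono (hle n)
  have hf_aesm : AEStronglyMeasurable (fun ω => Real.cosh (L * ‖S n ω‖)) Pr :=
    ((Real.continuous_cosh.comp
      (continuous_const.mul continuous_norm)).comp_aestronglyMeasurable
        hSn_sm.aestronglyMeasurable)
  have hf_int : Integrable (fun ω => Real.cosh (L * ‖S n ω‖)) Pr := by
    refine ⟨hf_aesm, HasFiniteIntegral.of_bounded (C := Real.cosh (L * (n * B))) ?_⟩
    filter_upwards [hSbdd n] with ω hω
    rw [Real.norm_eq_abs, abs_of_pos (Real.cosh_pos _), Real.cosh_le_cosh,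
      abs_of_nonneg (by positivity), abs_of_nonneg (by positivity)]
    exact mul_le_mul_of_nonneg_left hω hL.le
  have markov := mul_meas_ge_le_integral_of_nonneg
    (ae_of_all Pr fun ω => (Real.cosh_pos (L * ‖S n ω‖)).le) hf_int (Real.cosh (L * r))
  have hub : (Pr {ω | Real.cosh (L * r) ≤ Real.cosh (L * ‖S n ω‖)}).toReal ≤ δ := by
    have hcoshr : 0 < Real.cosh (L * r) := Real.cosh_pos _
    have := le_trans markov (main n le_rfl)
    calc (Pr {ω | Real.cosh (L * r) ≤ Real.cosh (L * ‖S n ω‖)}).toReal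
        ≤ Real.cosh (L * B) ^ n / Real.cosh (L * r) := by
          rw [le_div_iff₀ hcoshr, mul_comm]
          exact this
      _ ≤ δ := hnum
  -- set manipulations
  set A : Set Ω₀ := {ω | r < ‖S n ω‖} with hAdef
  have hAmeas : MeasurableSet A := by
    have : Measurable (fun ω => ‖S n ω‖) := hSn_sm.norm.measurable
    exact measurableSet_lt measurable_const this
  have hAsub : A ⊆ {ω | Real.cosh (L * r) ≤ Real.cosh (L * ‖S n ω‖)} := by
    intro ω hω
    simp only [hAdef, Set.mem_setOf_eq] at hω ⊢
    rw [Real.cosh_le_cosh, abs_of_nonneg (by positivity), abs_of_nonneg (by positivity)]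
    exact mul_le_mul_of_nonneg_left hω.le hL.le
  have hPA : Pr A ≤ ENNReal.ofReal δ := by
    rw [ENNReal.le_ofReal_iff_toReal_le (measure_ne_top Pr A) hδ0.le]
    calc (Pr A).toReal
        ≤ (Pr {ω | Real.cosh (L * r) ≤ Real.cosh (L * ‖S n ω‖)}).toReal := by
          apply ENNReal.toReal_mono (measure_ne_top Pr _)
          exact measure_mono hAsub
      _ ≤ δ := hub
  have hGeq : {ω | ‖(1 / n : ℝ) • ∑ i, X i ω‖ ≤ t} = Aᶜ := by
    ext ω
    simp only [Set.mem_setOf_eq, Set.mem_compl_iff, hAdef, not_lt]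
    rw [hsum ω, norm_smul, Real.norm_eq_abs, abs_of_pos (by positivity : (0:ℝ) < 1 / n),
      one_div, inv_mul_eq_div, div_le_iff₀ hn', hrdef, mul_comm]
  rw [hGeq, measure_compl hAmeas (measure_ne_top Pr A), measure_univ]
  calc ENNReal.ofReal (1 - δ) = ENNReal.ofReal 1 - ENNReal.ofReal δ :=
        ENNReal.ofReal_sub 1 hδ0.le
    _ = 1 - ENNReal.ofReal δ := by rw [ENNReal.ofReal_one]
    _ ≤ 1 - Pr A := tsub_le_tsub_left hPA 1
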